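/- Let a, b, k > 0 and y > 0, z > 0 be real numbers. Define h₀(y,z) = yz/k, h₁(y,z) = (z−b)/k² + z(a+y²)(y−z)/(k²y), and h₂(y,z) = (1/(k³y³))[by(−y(1+a+y²) + 2(a+y²)z) + z(ay(y + 2y³ + z − 6y²z) + a²(y² − 2yz − z²) + y³(−2z + y(3 + y² − 4yz + z²)))], and for real ε set h_ε(y,z) = h₀ + ε h₁ + ε² h₂. Then the invariance-equation residual R(ε) = f(h_ε(y,z), y, z) − ε [(∂h_ε/∂y)(y,z) · g₁(h_ε(y,z), y, z, ε) + (∂h_ε/∂z)(y,z) · g₂(y,z)] satisfies R(ε) = O(ε³) as ε → 0; i.e., there exist C > 0 and δ > 0 such that |R(ε)| ≤ C|ε|³ for |ε| < δ. -/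

import Mathlib

/-- Fast vector field of the 3D Sel'kov slow subsystem. -/
noncomputable def Selkovf (k : ℝ) (x y z : ℝ) : ℝ := y ^ 2 * z - k * x * y

/-- First slow vector field of the 3D Sel'kov slow subsystem. -/
noncomputable def Selkovg1 (a : ℝ) (x y z ε : ℝ) : ℝ := a * z + y ^ 2 * z - y + ε * x

/-- Second slow vector field of the 3D Sel'kov slow subsystem. -/
noncomputable def Selkovg2 (a b : ℝ) (y z : ℝ) : ℝ := -a * z - y ^ 2 * z + b

noncomputable def Selkovh0 (k : ℝ) (y z : ℝ) : ℝ := y * z / k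

noncomputable def Selkovh1 (a b k : ℝ) (y z : ℝ) : ℝ :=
  (z - b) / k ^ 2 + z * (a + y ^ 2) * (y - z) / (k ^ 2 * y)

noncomputable def Selkovh2 (a b k : ℝ) (y z : ℝ) : ℝ :=
  (b * y * (-y * (1 + a + y ^ 2) + 2 * (a + y ^ 2) * z) +
    z * (a * y * (y + 2 * y ^ 3 + z - 6 * y ^ 2 * z) +
      a ^ 2 * (y ^ 2 - 2 * y * z - z ^ 2) +
      y ^ 3 * (-2 * z + y * (3 + y ^ 2 - 4 * y * z + z ^ 2)))) / (k ^ 3 * y ^ 3)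

noncomputable def Selkovhε (a b k : ℝ) (y z ε : ℝ) : ℝ :=
  Selkovh0 k y z + ε * Selkovh1 a b k y z + ε ^ 2 * Selkovh2 a b k y z

set_option maxRecDepth 100000
set_option maxHeartbeats 1000000000

lemma selkov_cubic_bound (q0 q1 q2 q3 D ε : ℝ) (hD : 0 < D) (hε : |ε| < 1) :
    |ε ^ 3 * (q0 + q1 * ε + q2 * ε ^ 2 + q3 * ε ^ 3) / D| ≤
      ((|q0| + |q1| + |q2| + |q3|) / D + 1) * |ε| ^ 3 := by
  have h1 : |ε| ≤ 1 := hε.le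
  have h0 : (0:ℝ) ≤ |ε| := abs_nonneg ε
  have habs : |ε ^ 3 * (q0 + q1 * ε + q2 * ε ^ 2 + q3 * ε ^ 3) / D| =
      |ε| ^ 3 * |q0 + q1 * ε + q2 * ε ^ 2 + q3 * ε ^ 3| / D := by
    rw [abs_div, abs_mul, abs_pow, abs_of_pos hD]
  rw [habs]
  have hQ : |q0 + q1 * ε + q2 * ε ^ 2 + q3 * ε ^ 3| ≤ |q0| + |q1| + |q2| + |q3| := by
    have e2 : |ε| ^ 2 ≤ 1 := by nlinarith
    have e3 : |ε| ^ 3 ≤ 1 := by nlinarith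
    have b1 : |q1 * ε| ≤ |q1| := by
      rw [abs_mul]; nlinarith [abs_nonneg q1]
    have b2 : |q2 * ε ^ 2| ≤ |q2| := by
      rw [abs_mul, abs_pow]; nlinarith [abs_nonneg q2]
    have b3 : |q3 * ε ^ 3| ≤ |q3| := by
      rw [abs_mul, abs_pow]; nlinarith [abs_nonneg q3]
    calc |q0 + q1 * ε + q2 * ε ^ 2 + q3 * ε ^ 3|
        ≤ |q0 + q1 * ε + q2 * ε ^ 2| + |q3 * ε ^ 3| := abs_add_le _ _
      _ ≤ (|q0 + q1 * ε| + |q2 * ε ^ 2|) + |q3 * ε ^ 3| := by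
            have := abs_add_le (q0 + q1 * ε) (q2 * ε ^ 2); linarith
      _ ≤ ((|q0| + |q1 * ε|) + |q2 * ε ^ 2|) + |q3 * ε ^ 3| := by
            have := abs_add_le q0 (q1 * ε); linarith
      _ ≤ |q0| + |q1| + |q2| + |q3| := by linarith
  have hnn : (0:ℝ) ≤ |ε| ^ 3 := by positivity
  calc |ε| ^ 3 * |q0 + q1 * ε + q2 * ε ^ 2 + q3 * ε ^ 3| / D
      ≤ |ε| ^ 3 * (|q0| + |q1| + |q2| + |q3|) / D := by gcongr
    _ = ((|q0| + |q1| + |q2| + |q3|) / D) * |ε| ^ 3 := by ring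
    _ ≤ ((|q0| + |q1| + |q2| + |q3|) / D + 1) * |ε| ^ 3 := by nlinarith

lemma selkov_hasDerivAt_y (a b k z ε y : ℝ) (hy : y ≠ 0) (hk : k ≠ 0) :
    HasDerivAt (fun y' : ℝ => Selkovhε a b k y' z ε)
      (((3:ℝ)*y^4*z*ε^2 + (1:ℝ)*y^4*z^3*ε^2 + (-8:ℝ)*y^5*z^2*ε^2 + (3:ℝ)*y^6*z*ε^2 + (-1:ℝ)*k*y^4*z^2*ε + (2:ℝ)*k*y^5*z*ε + (1:ℝ)*k^2*y^4*z + (1:ℝ)*b*y^2*ε^2 + (-1:ℝ)*b*y^4*ε^2 + (-2:ℝ)*a*y*z^2*ε^2 + (-1:ℝ)*a*y^2*z*ε^2 + (2:ℝ)*a*y^4*z*ε^2 + (1:ℝ)*a*k*y^2*z^2*ε + (-4:ℝ)*a*b*y*z*ε^2 + (1:ℝ)*a*b*y^2*ε^2 + (3:ℝ)*a^2*z^3*ε^2 + (4:ℝ)*a^2*y*z^2*ε^2 + (-1:ℝ)*a^2*y^2*z*ε^2) / (k ^ 3 * y ^ 4)) y := by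
  have hev : (fun y' : ℝ => Selkovhε a b k y' z ε) =ᶠ[nhds y]
      (fun y' : ℝ => (((-1:ℝ)*a^2*z^3*ε^2) * (y' ^ 3)⁻¹ + ((1:ℝ)*a*z^2*ε^2 + (2:ℝ)*a*b*z*ε^2 + (-2:ℝ)*a^2*z^2*ε^2) * (y' ^ 2)⁻¹ + ((-1:ℝ)*b*ε^2 + (1:ℝ)*a*z*ε^2 + (-1:ℝ)*a*k*z^2*ε + (-1:ℝ)*a*b*ε^2 + (1:ℝ)*a^2*z*ε^2) * y'⁻¹ +
        ((-2:ℝ)*z^2*ε^2 + (1:ℝ)*k*z*ε + (2:ℝ)*b*z*ε^2 + (-1:ℝ)*b*k*ε + (-6:ℝ)*a*z^2*ε^2 + (1:ℝ)*a*k*z*ε) + ((3:ℝ)*z*ε^2 + (1:ℝ)*z^3*ε^2 + (-1:ℝ)*k*z^2*ε + (1:ℝ)*k^2*z + (-1:ℝ)*b*ε^2 + (2:ℝ)*a*z*ε^2) * y' + ((-4:ℝ)*z^2*ε^2 + (1:ℝ)*k*z*ε) * y' ^ 2 + ((1:ℝ)*z*ε^2) * y' ^ 3 + (0:ℝ) *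 y' ^ 4) / k ^ 3) := by
    filter_upwards [eventually_ne_nhds hy] with t ht
    simp only [Selkovhε, Selkovh0, Selkovh1, Selkovh2]
    field_simp
    ring
  have H' := (((((((((HasDerivAt.const_mul ((-1:ℝ)*a^2*z^3*ε^2) ((hasDerivAt_pow 3 y).inv (pow_ne_zero 3 hy))).add
      (HasDerivAt.const_mul ((1:ℝ)*a*z^2*ε^2 + (2:ℝ)*a*b*z*ε^2 + (-2:ℝ)*a^2*z^2*ε^2) ((hasDerivAt_pow 2 y).inv (pow_ne_zero 2 hy)))).add
      (HasDerivAt.const_mul ((-1:ℝ)*b*ε^2 + (1:ℝ)*a*z*ε^2 + (-1:ℝ)*a*k*z^2*ε + (-1:ℝ)*a*b*ε^2 + (1:ℝ)*a^2*z*ε^2) (hasDerivAt_inv hy))).add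
      (hasDerivAt_const y ((-2:ℝ)*z^2*ε^2 + (1:ℝ)*k*z*ε + (2:ℝ)*b*z*ε^2 + (-1:ℝ)*b*k*ε + (-6:ℝ)*a*z^2*ε^2 + (1:ℝ)*a*k*z*ε))).add
      (HasDerivAt.const_mul ((3:ℝ)*z*ε^2 + (1:ℝ)*z^3*ε^2 + (-1:ℝ)*k*z^2*ε + (1:ℝ)*k^2*z + (-1:ℝ)*b*ε^2 + (2:ℝ)*a*z*ε^2) (hasDerivAt_id y))).add
      (HasDerivAt.const_mul ((-4:ℝ)*z^2*ε^2 + (1:ℝ)*k*z*ε) (hasDerivAt_pow 2 y))).add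
      (HasDerivAt.const_mul ((1:ℝ)*z*ε^2) (hasDerivAt_pow 3 y))).add
      (HasDerivAt.const_mul (0:ℝ) (hasDerivAt_pow 4 y)))).div_const (k ^ 3)
  have H : HasDerivAt (fun y' : ℝ => (((-1:ℝ)*a^2*z^3*ε^2) * (y' ^ 3)⁻¹ + ((1:ℝ)*a*z^2*ε^2 + (2:ℝ)*a*b*z*ε^2 + (-2:ℝ)*a^2*z^2*ε^2) * (y' ^ 2)⁻¹ + ((-1:ℝ)*b*ε^2 + (1:ℝ)*a*z*ε^2 + (-1:ℝ)*a*k*z^2*ε + (-1:ℝ)*a*b*ε^2 + (1:ℝ)*a^2*z*ε^2) * y'⁻¹ +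
        ((-2:ℝ)*z^2*ε^2 + (1:ℝ)*k*z*ε + (2:ℝ)*b*z*ε^2 + (-1:ℝ)*b*k*ε + (-6:ℝ)*a*z^2*ε^2 + (1:ℝ)*a*k*z*ε) + ((3:ℝ)*z*ε^2 + (1:ℝ)*z^3*ε^2 + (-1:ℝ)*k*z^2*ε + (1:ℝ)*k^2*z + (-1:ℝ)*b*ε^2 + (2:ℝ)*a*z*ε^2) * y' + ((-4:ℝ)*z^2*ε^2 + (1:ℝ)*k*z*ε) * y' ^ 2 + ((1:ℝ)*z*ε^2) * y' ^ 3 + (0:ℝ) * y' ^ 4) / k ^ 3)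
      (((3:ℝ)*y^4*z*ε^2 + (1:ℝ)*y^4*z^3*ε^2 + (-8:ℝ)*y^5*z^2*ε^2 + (3:ℝ)*y^6*z*ε^2 + (-1:ℝ)*k*y^4*z^2*ε + (2:ℝ)*k*y^5*z*ε + (1:ℝ)*k^2*y^4*z + (1:ℝ)*b*y^2*ε^2 + (-1:ℝ)*b*y^4*ε^2 + (-2:ℝ)*a*y*z^2*ε^2 + (-1:ℝ)*a*y^2*z*ε^2 + (2:ℝ)*a*y^4*z*ε^2 + (1:ℝ)*a*k*y^2*z^2*ε + (-4:ℝ)*a*b*y*z*ε^2 + (1:ℝ)*a*b*y^2*ε^2 + (3:ℝ)*a^2*z^3*ε^2 + (4:ℝ)*a^2*y*z^2*ε^2 + (-1:ℝ)*a^2*y^2*z*ε^2) / (k ^ 3 * y ^ 4)) y := by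
    refine H'.congr_deriv ?_
    push_cast
    field_simp
    ring
  exact H.congr_of_eventuallyEq hev

lemma selkov_hasDerivAt_z (a b k y ε z : ℝ) (hy : y ≠ 0) (hk : k ≠ 0) :
    HasDerivAt (fun z' : ℝ => Selkovhε a b k y z' ε)
      (((-4:ℝ)*y^3*z*ε^2 + (3:ℝ)*y^4*ε^2 + (3:ℝ)*y^4*z^2*ε^2 + (-8:ℝ)*y^5*z*ε^2 + (1:ℝ)*y^6*ε^2 + (1:ℝ)*k*y^3*ε + (-2:ℝ)*k*y^4*z*ε + (1:ℝ)*k*y^5*ε + (1:ℝ)*k^2*y^4 + (2:ℝ)*b*y^3*ε^2 + (2:ℝ)*a*y*z*ε^2 + (1:ℝ)*a*y^2*ε^2 + (-12:ℝ)*a*y^3*z*ε^2 + (2:ℝ)*a*y^4*ε^2 + (-2:ℝ)*a*k*y^2*z*ε + (1:ℝ)*a*k*y^3*ε + (2:ℝ)*a*b*y*ε^2 + (-3:ℝ)*a^2*z^2*ε^2 + (-4:ℝ)*a^2*y*z*ε^2 + (1:ℝ)*a^2*y^2*ε^2) / (k ^ 3 * y ^ 3)) z := by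
  have hfun : (fun z' : ℝ => Selkovhε a b k y z' ε) =
      (fun z' : ℝ => (((-1:ℝ)*b*y^2*ε^2 + (-1:ℝ)*b*y^4*ε^2 + (-1:ℝ)*b*k*y^3*ε + (-1:ℝ)*a*b*y^2*ε^2) + ((3:ℝ)*y^4*ε^2 + (1:ℝ)*y^6*ε^2 + (1:ℝ)*k*y^3*ε + (1:ℝ)*k*y^5*ε + (1:ℝ)*k^2*y^4 + (2:ℝ)*b*y^3*ε^2 + (1:ℝ)*a*y^2*ε^2 + (2:ℝ)*a*y^4*ε^2 + (1:ℝ)*a*k*y^3*ε + (2:ℝ)*a*b*y*ε^2 + (1:ℝ)*a^2*y^2*ε^2) * z' + ((-2:ℝ)*y^3*ε^2 + (-4:ℝ)*y^5*ε^2 + (-1:ℝ)*k*y^4*ε + (1:ℝ)*a*y*ε^2 + (-6:ℝ)*a*y^3*ε^2 + (-1:ℝ)*a*k*y^2*ε + (-2:ℝ)*a^2*y*ε^2) * z' ^ 2 + ((1:ℝ)*y^4*ε^2 + (-1:ℝ)*a^2*ε^2) * z' ^ 3) / (k ^ 3 * y ^ 3)) := by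
    funext z'
    simp only [Selkovhε, Selkovh0, Selkovh1, Selkovh2]
    field_simp
    ring
  rw [hfun]
  have H' := ((((hasDerivAt_const z ((-1:ℝ)*b*y^2*ε^2 + (-1:ℝ)*b*y^4*ε^2 + (-1:ℝ)*b*k*y^3*ε + (-1:ℝ)*a*b*y^2*ε^2)).add
      (HasDerivAt.const_mul ((3:ℝ)*y^4*ε^2 + (1:ℝ)*y^6*ε^2 + (1:ℝ)*k*y^3*ε + (1:ℝ)*k*y^5*ε + (1:ℝ)*k^2*y^4 + (2:ℝ)*b*y^3*ε^2 + (1:ℝ)*a*y^2*ε^2 + (2:ℝ)*a*y^4*ε^2 + (1:ℝ)*a*k*y^3*ε + (2:ℝ)*a*b*y*ε^2 + (1:ℝ)*a^2*y^2*ε^2) (hasDerivAt_id z))).add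
      (HasDerivAt.const_mul ((-2:ℝ)*y^3*ε^2 + (-4:ℝ)*y^5*ε^2 + (-1:ℝ)*k*y^4*ε + (1:ℝ)*a*y*ε^2 + (-6:ℝ)*a*y^3*ε^2 + (-1:ℝ)*a*k*y^2*ε + (-2:ℝ)*a^2*y*ε^2) (hasDerivAt_pow 2 z))).add
      (HasDerivAt.const_mul ((1:ℝ)*y^4*ε^2 + (-1:ℝ)*a^2*ε^2) (hasDerivAt_pow 3 z))).div_const (k ^ 3 * y ^ 3)
  refine H'.congr_deriv ?_
  push_cast
  field_simp
  ring

lemma selkov_pos_gen (q0 q1 q2 q3 D : ℝ) (hD : 0 < D) :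
    0 < (|q0| + |q1| + |q2| + |q3|) / D + 1 := by
  have h : (0:ℝ) ≤ (|q0| + |q1| + |q2| + |q3|) / D :=
    div_nonneg (by positivity) hD.le
  linarith

set_option maxHeartbeats 1000000000 in
/-- The invariance-equation residual of the `O(ε²)` regular expansion of the SIM of the
3D Sel'kov slow subsystem is `O(ε³)` as `ε → 0`. -/
theorem selkov_invariance_residual_isBigO (a b k y z : ℝ)
    (ha : 0 < a) (hb : 0 < b) (hk : 0 < k) (hy : 0 < y) (hz : 0 < z) :
    ∃ C > (0 : ℝ), ∃ δ > (0 : ℝ), ∀ ε : ℝ, |ε| < δ →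
      |Selkovf k (Selkovhε a b k y z ε) y z -
        ε * (deriv (fun y' : ℝ => Selkovhε a b k y' z ε) y *
              Selkovg1 a (Selkovhε a b k y z ε) y z ε +
            deriv (fun z' : ℝ => Selkovhε a b k y z' ε) z *
              Selkovg2 a b y z)| ≤ C * |ε| ^ 3 := by
  have hy0 : y ≠ 0 := ne_of_gt hy
  have hk0 : k ≠ 0 := ne_of_gt hk
  have hD : (0:ℝ) < k ^ 6 * y ^ 7 := by positivity
  refine ⟨_, selkov_pos_gen ((-1:ℝ)*k^3*y^7*z^2 + (3:ℝ)*k^3*y^8*z + (3:ℝ)*k^3*y^8*z^3 + (-18:ℝ)*k^3*y^9*z^2 + (-1:ℝ)*k^3*y^9*z^4 + (6:ℝ)*k^3*y^10*z + (11:ℝ)*k^3*y^10*z^3 + (-11:ℝ)*k^3*y^11*z^2 + (1:ℝ)*k^3*y^12*z + (1:ℝ)*b*k^3*y^6 + (4:ℝ)*b*k^3*y^7*z + (-4:ℝ)*b*k^3*y^8 + (-3:ℝ)*b*k^3*y^8*z^2 + (11:ℝ)*b*k^3*y^9*z + (-1:ℝ)*b*k^3*y^10 + (-2:ℝ)*b^2*k^3*y^7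 + (-2:ℝ)*a*k^3*y^5*z^2 + (-1:ℝ)*a*k^3*y^6*z + (2:ℝ)*a*k^3*y^6*z^3 + (-5:ℝ)*a*k^3*y^7*z^2 + (-1:ℝ)*a*k^3*y^7*z^4 + (6:ℝ)*a*k^3*y^8*z + (11:ℝ)*a*k^3*y^8*z^3 + (-25:ℝ)*a*k^3*y^9*z^2 + (3:ℝ)*a*k^3*y^10*z + (-7:ℝ)*a*b*k^3*y^5*z + (4:ℝ)*a*b*k^3*y^6*z^2 + (16:ℝ)*a*b*k^3*y^7*z + (-2:ℝ)*a*b*k^3*y^8 + (-2:ℝ)*a*b^2*k^3*y^5 + (5:ℝ)*a^2*k^3*y^4*z^3 + (7:ℝ)*a^2*k^3*y^5*z^2 + (-3:ℝ)*a^2*k^3*y^5*z^4 + (-7:ℝ)*a^2*k^3*y^6*z^3 + (-17:ℝ)*a^2*k^3*y^7*z^2 + (3:ℝ)*a^2*k^3*y^8*z + (7:ℝ)*a^2*b*k^3*y^4*z^2 + (5:ℝ)*a^2*b*k^3*y^5*z + (-1:ℝ)*a^2*b*k^3*y^6 + (-3:ℝ)*a^3*k^3*y^3*z^4 + (-7:ℝ)*a^3*k^3*y^4*z^3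 + (-3:ℝ)*a^3*k^3*y^5*z^2 + (1:ℝ)*a^3*k^3*y^6*z) ((3:ℝ)*k^2*y^7*z^3 + (-8:ℝ)*k^2*y^8*z^2 + (-3:ℝ)*k^2*y^8*z^4 + (15:ℝ)*k^2*y^9*z^3 + (-6:ℝ)*k^2*y^10*z^2 + (-3:ℝ)*b*k^2*y^7*z^2 + (4:ℝ)*b*k^2*y^8*z + (8:ℝ)*a*k^2*y^7*z^3 + (-6:ℝ)*a*k^2*y^8*z^2 + (3:ℝ)*a*b*k^2*y^5*z^2 + (-1:ℝ)*a^2*k^2*y^4*z^4 + (-3:ℝ)*a^2*k^2*y^5*z^3) ((-3:ℝ)*k*y^7*z^2 + (-3:ℝ)*k*y^7*z^4 + (18:ℝ)*k*y^8*z^3 + (2:ℝ)*k*y^8*z^5 + (-12:ℝ)*k*y^9*z^2 + (-15:ℝ)*k*y^9*z^4 + (20:ℝ)*k*y^10*z^3 + (-5:ℝ)*k*y^11*z^2 + (-1:ℝ)*b*k*y^5*z + (5:ℝ)*b*k*y^7*z + (3:ℝ)*b*k*y^7*z^3 + (-14:ℝ)*b*k*y^8*z^2 + (6:ℝ)*b*k*y^9*z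 + (1:ℝ)*b^2*k*y^5 + (-1:ℝ)*b^2*k*y^7 + (2:ℝ)*a*k*y^4*z^3 + (1:ℝ)*a*k*y^5*z^2 + (1:ℝ)*a*k*y^5*z^4 + (-6:ℝ)*a*k*y^7*z^2 + (-11:ℝ)*a*k*y^7*z^4 + (26:ℝ)*a*k*y^8*z^3 + (-9:ℝ)*a*k*y^9*z^2 + (4:ℝ)*a*b*k*y^4*z^2 + (-3:ℝ)*a*b*k*y^5*z + (-4:ℝ)*a*b*k*y^5*z^3 + (4:ℝ)*a*b*k*y^7*z + (-4:ℝ)*a*b^2*k*y^4*z + (1:ℝ)*a*b^2*k*y^5 + (-6:ℝ)*a^2*k*y^3*z^4 + (-4:ℝ)*a^2*k*y^4*z^3 + (2:ℝ)*a^2*k*y^4*z^5 + (2:ℝ)*a^2*k*y^5*z^2 + (7:ℝ)*a^2*k*y^5*z^4 + (-3:ℝ)*a^2*k*y^7*z^2 + (-3:ℝ)*a^2*b*k*y^3*z^3 + (10:ℝ)*a^2*b*k*y^4*z^2 + (-2:ℝ)*a^2*b*k*y^5*z + (4:ℝ)*a^3*k*y^2*z^5 + (3:ℝ)*a^3*k*y^3*z^4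 + (-6:ℝ)*a^3*k*y^4*z^3 + (1:ℝ)*a^3*k*y^5*z^2) ((6:ℝ)*y^7*z^3 + (2:ℝ)*y^7*z^5 + (-9:ℝ)*y^8*z^2 + (-22:ℝ)*y^8*z^4 + (-1:ℝ)*y^8*z^6 + (42:ℝ)*y^9*z^3 + (12:ℝ)*y^9*z^5 + (-12:ℝ)*y^10*z^2 + (-36:ℝ)*y^10*z^4 + (20:ℝ)*y^11*z^3 + (-3:ℝ)*y^12*z^2 + (2:ℝ)*b*y^5*z^2 + (-12:ℝ)*b*y^7*z^2 + (-2:ℝ)*b*y^7*z^4 + (8:ℝ)*b*y^8*z + (18:ℝ)*b*y^8*z^3 + (-18:ℝ)*b*y^9*z^2 + (4:ℝ)*b*y^10*z + (1:ℝ)*b^2*y^4 + (-2:ℝ)*b^2*y^5*z + (2:ℝ)*b^2*y^7*z + (-1:ℝ)*b^2*y^8 + (-4:ℝ)*a*y^4*z^4 + (1:ℝ)*a*y^5*z^3 + (1:ℝ)*a*y^5*z^5 + (25:ℝ)*a*y^7*z^3 + (6:ℝ)*a*y^7*z^5 + (-14:ℝ)*a*y^8*z^2 + (-52:ℝ)*a*y^8*z^4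 + (42:ℝ)*a*y^9*z^3 + (-8:ℝ)*a*y^10*z^2 + (-3:ℝ)*a*b*y^3*z^2 + (-2:ℝ)*a*b*y^4*z + (-4:ℝ)*a*b*y^4*z^3 + (15:ℝ)*a*b*y^5*z^2 + (2:ℝ)*a*b*y^5*z^4 + (-16:ℝ)*a*b*y^7*z^2 + (6:ℝ)*a*b*y^8*z + (-6:ℝ)*a*b^2*y^3*z + (2:ℝ)*a*b^2*y^4 + (8:ℝ)*a*b^2*y^4*z^2 + (-4:ℝ)*a*b^2*y^5*z + (2:ℝ)*a^2*y^2*z^4 + (3:ℝ)*a^2*y^3*z^3 + (6:ℝ)*a^2*y^3*z^5 + (1:ℝ)*a^2*y^4*z^2 + (-10:ℝ)*a^2*y^4*z^4 + (-2:ℝ)*a^2*y^4*z^6 + (-12:ℝ)*a^2*y^5*z^3 + (2:ℝ)*a^2*y^5*z^5 + (18:ℝ)*a^2*y^7*z^3 + (-6:ℝ)*a^2*y^8*z^2 + (12:ℝ)*a^2*b*y^2*z^3 + (9:ℝ)*a^2*b*y^3*z^2 + (-6:ℝ)*a^2*b*y^3*z^4 + (-4:ℝ)*a^2*b*y^4*z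 + (-30:ℝ)*a^2*b*y^4*z^3 + (14:ℝ)*a^2*b*y^5*z^2 + (8:ℝ)*a^2*b^2*y^2*z^2 + (-6:ℝ)*a^2*b^2*y^3*z + (1:ℝ)*a^2*b^2*y^4 + (-5:ℝ)*a^3*y*z^5 + (-12:ℝ)*a^3*y^2*z^4 + (-3:ℝ)*a^3*y^3*z^3 + (18:ℝ)*a^3*y^3*z^5 + (2:ℝ)*a^3*y^4*z^2 + (20:ℝ)*a^3*y^4*z^4 + (-10:ℝ)*a^3*y^5*z^3 + (-10:ℝ)*a^3*b*y*z^4 + (-12:ℝ)*a^3*b*y^2*z^3 + (12:ℝ)*a^3*b*y^3*z^2 + (-2:ℝ)*a^3*b*y^4*z + (3:ℝ)*a^4*z^6 + (10:ℝ)*a^4*y*z^5 + (4:ℝ)*a^4*y^2*z^4 + (-6:ℝ)*a^4*y^3*z^3 + (1:ℝ)*a^4*y^4*z^2) _ hD, 1, one_pos, ?_⟩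
  intro ε hε
  have Hy := selkov_hasDerivAt_y a b k z ε y hy0 hk0
  have Hz := selkov_hasDerivAt_z a b k y ε z hy0 hk0
  have key : Selkovf k (Selkovhε a b k y z ε) y z -
        ε * (deriv (fun y' : ℝ => Selkovhε a b k y' z ε) y *
              Selkovg1 a (Selkovhε a b k y z ε) y z ε +
            deriv (fun z' : ℝ => Selkovhε a b k y z' ε) z *
              Selkovg2 a b y z) =
      ε ^ 3 * (((-1:ℝ)*k^3*y^7*z^2 + (3:ℝ)*k^3*y^8*z + (3:ℝ)*k^3*y^8*z^3 + (-18:ℝ)*k^3*y^9*z^2 + (-1:ℝ)*k^3*y^9*z^4 + (6:ℝ)*k^3*y^10*z + (11:ℝ)*k^3*y^10*z^3 + (-11:ℝ)*k^3*y^11*z^2 + (1:ℝ)*k^3*y^12*z + (1:ℝ)*b*k^3*y^6 + (4:ℝ)*b*k^3*y^7*z + (-4:ℝ)*b*k^3*y^8 + (-3:ℝ)*b*k^3*y^8*z^2 + (11:ℝ)*b*k^3*y^9*z + (-1:ℝ)*b*k^3*y^10 + (-2:ℝ)*b^2*k^3*y^7 + (-2:ℝ)*a*k^3*y^5*z^2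 + (-1:ℝ)*a*k^3*y^6*z + (2:ℝ)*a*k^3*y^6*z^3 + (-5:ℝ)*a*k^3*y^7*z^2 + (-1:ℝ)*a*k^3*y^7*z^4 + (6:ℝ)*a*k^3*y^8*z + (11:ℝ)*a*k^3*y^8*z^3 + (-25:ℝ)*a*k^3*y^9*z^2 + (3:ℝ)*a*k^3*y^10*z + (-7:ℝ)*a*b*k^3*y^5*z + (4:ℝ)*a*b*k^3*y^6*z^2 + (16:ℝ)*a*b*k^3*y^7*z + (-2:ℝ)*a*b*k^3*y^8 + (-2:ℝ)*a*b^2*k^3*y^5 + (5:ℝ)*a^2*k^3*y^4*z^3 + (7:ℝ)*a^2*k^3*y^5*z^2 + (-3:ℝ)*a^2*k^3*y^5*z^4 + (-7:ℝ)*a^2*k^3*y^6*z^3 + (-17:ℝ)*a^2*k^3*y^7*z^2 + (3:ℝ)*a^2*k^3*y^8*z + (7:ℝ)*a^2*b*k^3*y^4*z^2 + (5:ℝ)*a^2*b*k^3*y^5*z + (-1:ℝ)*a^2*b*k^3*y^6 + (-3:ℝ)*a^3*k^3*y^3*z^4 + (-7:ℝ)*a^3*k^3*y^4*z^3 + (-3:ℝ)*a^3*k^3*y^5*z^2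 + (1:ℝ)*a^3*k^3*y^6*z) + ((3:ℝ)*k^2*y^7*z^3 + (-8:ℝ)*k^2*y^8*z^2 + (-3:ℝ)*k^2*y^8*z^4 + (15:ℝ)*k^2*y^9*z^3 + (-6:ℝ)*k^2*y^10*z^2 + (-3:ℝ)*b*k^2*y^7*z^2 + (4:ℝ)*b*k^2*y^8*z + (8:ℝ)*a*k^2*y^7*z^3 + (-6:ℝ)*a*k^2*y^8*z^2 + (3:ℝ)*a*b*k^2*y^5*z^2 + (-1:ℝ)*a^2*k^2*y^4*z^4 + (-3:ℝ)*a^2*k^2*y^5*z^3) * ε + ((-3:ℝ)*k*y^7*z^2 + (-3:ℝ)*k*y^7*z^4 + (18:ℝ)*k*y^8*z^3 + (2:ℝ)*k*y^8*z^5 + (-12:ℝ)*k*y^9*z^2 + (-15:ℝ)*k*y^9*z^4 + (20:ℝ)*k*y^10*z^3 + (-5:ℝ)*k*y^11*z^2 + (-1:ℝ)*b*k*y^5*z + (5:ℝ)*b*k*y^7*z + (3:ℝ)*b*k*y^7*z^3 + (-14:ℝ)*b*k*y^8*z^2 + (6:ℝ)*b*k*y^9*z + (1:ℝ)*b^2*k*y^5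 + (-1:ℝ)*b^2*k*y^7 + (2:ℝ)*a*k*y^4*z^3 + (1:ℝ)*a*k*y^5*z^2 + (1:ℝ)*a*k*y^5*z^4 + (-6:ℝ)*a*k*y^7*z^2 + (-11:ℝ)*a*k*y^7*z^4 + (26:ℝ)*a*k*y^8*z^3 + (-9:ℝ)*a*k*y^9*z^2 + (4:ℝ)*a*b*k*y^4*z^2 + (-3:ℝ)*a*b*k*y^5*z + (-4:ℝ)*a*b*k*y^5*z^3 + (4:ℝ)*a*b*k*y^7*z + (-4:ℝ)*a*b^2*k*y^4*z + (1:ℝ)*a*b^2*k*y^5 + (-6:ℝ)*a^2*k*y^3*z^4 + (-4:ℝ)*a^2*k*y^4*z^3 + (2:ℝ)*a^2*k*y^4*z^5 + (2:ℝ)*a^2*k*y^5*z^2 + (7:ℝ)*a^2*k*y^5*z^4 + (-3:ℝ)*a^2*k*y^7*z^2 + (-3:ℝ)*a^2*b*k*y^3*z^3 + (10:ℝ)*a^2*b*k*y^4*z^2 + (-2:ℝ)*a^2*b*k*y^5*z + (4:ℝ)*a^3*k*y^2*z^5 + (3:ℝ)*a^3*k*y^3*z^4 + (-6:ℝ)*a^3*k*y^4*z^3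 + (1:ℝ)*a^3*k*y^5*z^2) * ε ^ 2 + ((6:ℝ)*y^7*z^3 + (2:ℝ)*y^7*z^5 + (-9:ℝ)*y^8*z^2 + (-22:ℝ)*y^8*z^4 + (-1:ℝ)*y^8*z^6 + (42:ℝ)*y^9*z^3 + (12:ℝ)*y^9*z^5 + (-12:ℝ)*y^10*z^2 + (-36:ℝ)*y^10*z^4 + (20:ℝ)*y^11*z^3 + (-3:ℝ)*y^12*z^2 + (2:ℝ)*b*y^5*z^2 + (-12:ℝ)*b*y^7*z^2 + (-2:ℝ)*b*y^7*z^4 + (8:ℝ)*b*y^8*z + (18:ℝ)*b*y^8*z^3 + (-18:ℝ)*b*y^9*z^2 + (4:ℝ)*b*y^10*z + (1:ℝ)*b^2*y^4 + (-2:ℝ)*b^2*y^5*z + (2:ℝ)*b^2*y^7*z + (-1:ℝ)*b^2*y^8 + (-4:ℝ)*a*y^4*z^4 + (1:ℝ)*a*y^5*z^3 + (1:ℝ)*a*y^5*z^5 + (25:ℝ)*a*y^7*z^3 + (6:ℝ)*a*y^7*z^5 + (-14:ℝ)*a*y^8*z^2 + (-52:ℝ)*a*y^8*z^4 + (42:ℝ)*a*y^9*z^3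 + (-8:ℝ)*a*y^10*z^2 + (-3:ℝ)*a*b*y^3*z^2 + (-2:ℝ)*a*b*y^4*z + (-4:ℝ)*a*b*y^4*z^3 + (15:ℝ)*a*b*y^5*z^2 + (2:ℝ)*a*b*y^5*z^4 + (-16:ℝ)*a*b*y^7*z^2 + (6:ℝ)*a*b*y^8*z + (-6:ℝ)*a*b^2*y^3*z + (2:ℝ)*a*b^2*y^4 + (8:ℝ)*a*b^2*y^4*z^2 + (-4:ℝ)*a*b^2*y^5*z + (2:ℝ)*a^2*y^2*z^4 + (3:ℝ)*a^2*y^3*z^3 + (6:ℝ)*a^2*y^3*z^5 + (1:ℝ)*a^2*y^4*z^2 + (-10:ℝ)*a^2*y^4*z^4 + (-2:ℝ)*a^2*y^4*z^6 + (-12:ℝ)*a^2*y^5*z^3 + (2:ℝ)*a^2*y^5*z^5 + (18:ℝ)*a^2*y^7*z^3 + (-6:ℝ)*a^2*y^8*z^2 + (12:ℝ)*a^2*b*y^2*z^3 + (9:ℝ)*a^2*b*y^3*z^2 + (-6:ℝ)*a^2*b*y^3*z^4 + (-4:ℝ)*a^2*b*y^4*z + (-30:ℝ)*a^2*b*y^4*z^3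 + (14:ℝ)*a^2*b*y^5*z^2 + (8:ℝ)*a^2*b^2*y^2*z^2 + (-6:ℝ)*a^2*b^2*y^3*z + (1:ℝ)*a^2*b^2*y^4 + (-5:ℝ)*a^3*y*z^5 + (-12:ℝ)*a^3*y^2*z^4 + (-3:ℝ)*a^3*y^3*z^3 + (18:ℝ)*a^3*y^3*z^5 + (2:ℝ)*a^3*y^4*z^2 + (20:ℝ)*a^3*y^4*z^4 + (-10:ℝ)*a^3*y^5*z^3 + (-10:ℝ)*a^3*b*y*z^4 + (-12:ℝ)*a^3*b*y^2*z^3 + (12:ℝ)*a^3*b*y^3*z^2 + (-2:ℝ)*a^3*b*y^4*z + (3:ℝ)*a^4*z^6 + (10:ℝ)*a^4*y*z^5 + (4:ℝ)*a^4*y^2*z^4 + (-6:ℝ)*a^4*y^3*z^3 + (1:ℝ)*a^4*y^4*z^2) * ε ^ 3) / (k ^ 6 * y ^ 7) := by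
    rw [Hy.deriv, Hz.deriv]
    simp only [Selkovf, Selkovg1, Selkovg2, Selkovhε, Selkovh0, Selkovh1, Selkovh2]
    field_simp
    ring
  rw [key]
  exact selkov_cubic_bound _ _ _ _ _ ε hD hε
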